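/- arXiv:2505.06028 — 3 statements merged into one kernel-verified Lean document; each statement's English description precedes it below -/
import Mathlib

section
/- Let B(z_1,…,z_d) be a power series with nonnegative real coefficients that has full rank and converges absolutely on a neighborhood Ω of 0 in ℂ^d. Then its cumulant generating function K : t ↦ log B(e^{t_1},…,e^{t_d}) is strictly convex on the set Ψ := {t ∈ ℝ^d : e^t ∈ Ω} (where e^t := (e^{t_1},…,e^{t_d})). -/
open scoped BigOperators Topology

namespace PaperStmt

variable {d : ℕ}

/-- Evaluation at a real point of the multivariate power series with coefficient family `c`. -/
noncomputable def evalR (c : (Fin d → ℕ) → ℝ) (x : Fin d → ℝ) : ℝ :=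
  ∑' n : Fin d → ℕ, c n * ∏ j, x j ^ n j

/-- `c` has full rank: the differences of vectors in the support span all of `ℝ^d`. -/
def FullRank (c : (Fin d → ℕ) → ℝ) : Prop :=
  Submodule.span ℝ
    {v : Fin d → ℝ | ∃ n m : Fin d → ℕ, c n ≠ 0 ∧ c m ≠ 0 ∧
      v = fun j => (n j : ℝ) - (m j : ℝ)} = ⊤

end PaperStmt

open PaperStmt

private lemma strict_amgm {a b p q : ℝ} (ha : 0 < a) (hb : 0 < b) (hab : a + b = 1)
    (hp : 0 ≤ p) (hq : 0 ≤ q) (hpq : p ≠ q) : p ^ a * q ^ b < a * p + b * q := by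
  rcases hp.eq_or_lt with hp0 | hp0
  · have hq0 : 0 < q := lt_of_le_of_ne hq (fun h => hpq (hp0.symm.trans h))
    rw [← hp0, Real.zero_rpow ha.ne', zero_mul, mul_zero, zero_add]
    positivity
  rcases hq.eq_or_lt with hq0 | hq0
  · rw [← hq0, Real.zero_rpow hb.ne', mul_zero, mul_zero, add_zero]
    positivity
  have hlog := strictConcaveOn_log_Ioi.2 (Set.mem_Ioi.2 hp0) (Set.mem_Ioi.2 hq0) hpq ha hb hab
  have h1 : p ^ a * q ^ b = Real.exp (a * Real.log p + b * Real.log q) := by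
    rw [Real.exp_add, Real.rpow_def_of_pos hp0, Real.rpow_def_of_pos hq0,
      mul_comm (Real.log p), mul_comm (Real.log q)]
  have h2 : 0 < a * p + b * q := by positivity
  rw [h1, ← Real.exp_log h2]
  exact Real.exp_lt_exp.2 (by simpa [smul_eq_mul] using hlog)

/-- Convexity of the cumulant generating function.
If a power series `B` (given by its coefficient family `c`) with nonnegative coefficients
has full rank and converges absolutely on a neighborhood `Ω` of `0` in `ℂ^d`,
then its cumulant generating function `K : t ↦ log B(e^t)` is strictly convex on
`Ψ := {t ∈ ℝ^d : e^t ∈ Ω}`. -/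
theorem cumulant_generating_function_strictly_convex {d : ℕ}
    (c : (Fin d → ℕ) → ℝ)
    (hnonneg : ∀ n, 0 ≤ c n)
    (Ω : Set (Fin d → ℂ)) (hΩ : Ω ∈ nhds (0 : Fin d → ℂ))
    (hconv : ∀ z ∈ Ω, Summable fun n : Fin d → ℕ => ‖(c n : ℂ) * ∏ j, z j ^ n j‖)
    (hrank : FullRank c)
    (K : (Fin d → ℝ) → ℝ)
    (hK : K = fun t => Real.log (evalR c fun j => Real.exp (t j)))
    (Ψ : Set (Fin d → ℝ))
    (hΨ : Ψ = {t | (fun j => (Real.exp (t j) : ℂ)) ∈ Ω}) :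
    ∀ x ∈ Ψ, ∀ y ∈ Ψ, x ≠ y → ∀ a b : ℝ, 0 < a → 0 < b → a + b = 1 →
      a • x + b • y ∈ Ψ → K (a • x + b • y) < a * K x + b * K y := by
  intro x hx y hy hxy a b ha hb hab hmem
  classical
  set S : (Fin d → ℕ) → (Fin d → ℝ) → ℝ := fun n t => ∑ j, (n j : ℝ) * t j with hS
  have hprod : ∀ (n : Fin d → ℕ) (t : Fin d → ℝ),
      (∏ j, Real.exp (t j) ^ n j) = Real.exp (S n t) := by
    intro n t
    rw [hS]
    simp only
    rw [Real.exp_sum]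
    exact Finset.prod_congr rfl fun j _ => (Real.exp_nat_mul (t j) (n j)).symm
  -- summability at points of Ψ
  have hsum : ∀ t ∈ Ψ, Summable (fun n : Fin d → ℕ => c n * Real.exp (S n t)) := by
    intro t ht
    rw [hΨ] at ht
    refine (hconv _ ht).congr fun n => ?_
    have h1 : ((c n : ℂ) * ∏ j, ((Real.exp (t j) : ℂ)) ^ n j)
        = ((c n * ∏ j, Real.exp (t j) ^ n j : ℝ) : ℂ) := by push_cast; ring
    rw [h1, Complex.norm_real, Real.norm_eq_abs,
      abs_of_nonneg (mul_nonneg (hnonneg n) (by positivity)), hprod n t]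
  set F : (Fin d → ℝ) → ℝ := fun t => ∑' n, c n * Real.exp (S n t) with hF
  have heval : ∀ t : Fin d → ℝ, evalR c (fun j => Real.exp (t j)) = F t := by
    intro t
    rw [hF]
    simp only [evalR]
    exact tsum_congr fun n => by rw [hprod n t]
  have hKF : ∀ t, K t = Real.log (F t) := by
    intro t
    rw [hK]
    simp only
    rw [heval t]
  -- key full-rank consequence
  have hw : ∃ n m : Fin d → ℕ, c n ≠ 0 ∧ c m ≠ 0 ∧
      (∑ j, ((n j : ℝ) - m j) * (x j - y j)) ≠ 0 := by
    by_contra h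
    push_neg at h
    set φ : (Fin d → ℝ) →ₗ[ℝ] ℝ :=
      { toFun := fun v => ∑ j, v j * (x j - y j)
        map_add' := fun u v => by
          simp [add_mul, Finset.sum_add_distrib]
        map_smul' := fun r v => by
          simp [Finset.mul_sum, mul_assoc] } with hφdef
    have hsub : {v : Fin d → ℝ | ∃ n m : Fin d → ℕ, c n ≠ 0 ∧ c m ≠ 0 ∧
        v = fun j => (n j : ℝ) - (m j : ℝ)} ⊆ ↑(LinearMap.ker φ) := by
      rintro v ⟨n, m, hn, hm, rfl⟩
      exact LinearMap.mem_ker.2 (h n m hn hm)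
    have hspan : Submodule.span ℝ _ ≤ LinearMap.ker φ := Submodule.span_le.2 hsub
    rw [hrank] at hspan
    have hφ0 : φ (fun j => x j - y j) = 0 :=
      LinearMap.mem_ker.1 (hspan Submodule.mem_top)
    have hsq : ∑ j, (x j - y j) ^ 2 = 0 := by
      have : φ (fun j => x j - y j) = ∑ j, (x j - y j) ^ 2 := by
        rw [hφdef]
        simp [sq]
      rw [← this, hφ0]
    have hzero : ∀ j ∈ Finset.univ, (x j - y j) ^ 2 = 0 :=
      (Finset.sum_eq_zero_iff_of_nonneg (fun j _ => sq_nonneg _)).1 hsq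
    exact hxy (funext fun j => sub_eq_zero.1 (pow_eq_zero_iff two_ne_zero |>.1
      (hzero j (Finset.mem_univ j))))
  obtain ⟨n₁, n₂, hn₁, hn₂, hnm⟩ := hw
  have hc₁ : 0 < c n₁ := (hnonneg n₁).lt_of_ne' hn₁
  have hc₂ : 0 < c n₂ := (hnonneg n₂).lt_of_ne' hn₂
  -- positivity of F on Ψ
  have hFpos : ∀ t ∈ Ψ, 0 < F t := by
    intro t ht
    have hle : c n₁ * Real.exp (S n₁ t) ≤ F t :=
      Summable.le_tsum (hsum t ht) n₁ (fun n _ => mul_nonneg (hnonneg n) (Real.exp_nonneg _))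
    have : 0 < c n₁ * Real.exp (S n₁ t) := mul_pos hc₁ (Real.exp_pos _)
    linarith
  set z : Fin d → ℝ := a • x + b • y with hz
  have hSz : ∀ n, S n z = a * S n x + b * S n y := by
    intro n
    rw [hS]
    simp only [hz, Pi.add_apply, Pi.smul_apply, smul_eq_mul]
    rw [Finset.mul_sum, Finset.mul_sum, ← Finset.sum_add_distrib]
    exact Finset.sum_congr rfl fun j _ => by ring
  have hFx : 0 < F x := hFpos x hx
  have hFy : 0 < F y := hFpos y hy
  have hFz : 0 < F z := hFpos z hmem
  set u : (Fin d → ℕ) → ℝ := fun n => c n * Real.exp (S n x) with hu_def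
  set v : (Fin d → ℕ) → ℝ := fun n => c n * Real.exp (S n y) with hv_def
  have hu : Summable u := hsum x hx
  have hv : Summable v := hsum y hy
  have hmz : Summable (fun n => c n * Real.exp (S n z)) := hsum z hmem
  set P : (Fin d → ℕ) → ℝ := fun n => u n / F x with hP_def
  set Q : (Fin d → ℕ) → ℝ := fun n => v n / F y with hQ_def
  have hFux : ∑' n, u n = F x := rfl
  have hFvy : ∑' n, v n = F y := rfl
  -- pointwise identity
  have hpoint : ∀ n, c n * Real.exp (S n z) = u n ^ a * v n ^ b := by
    intro n
    rcases (hnonneg n).eq_or_lt with h0 | h0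
    · rw [hu_def, hv_def]
      simp only [← h0, zero_mul, Real.zero_rpow ha.ne', Real.zero_rpow hb.ne', mul_zero]
    · rw [hu_def, hv_def]
      simp only
      rw [Real.mul_rpow h0.le (Real.exp_nonneg _), Real.mul_rpow h0.le (Real.exp_nonneg _),
        ← Real.exp_mul, ← Real.exp_mul, mul_mul_mul_comm, ← Real.rpow_add h0, hab,
        Real.rpow_one, ← Real.exp_add, hSz n, mul_comm (S n x) a, mul_comm (S n y) b]
  have hfactor : ∀ n, u n ^ a * v n ^ b = F x ^ a * F y ^ b * (P n ^ a * Q n ^ b) := by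
    intro n
    have hun : 0 ≤ u n := mul_nonneg (hnonneg n) (Real.exp_nonneg _)
    have hvn : 0 ≤ v n := mul_nonneg (hnonneg n) (Real.exp_nonneg _)
    rw [hP_def, hQ_def]
    simp only
    rw [Real.div_rpow hun hFx.le, Real.div_rpow hvn hFy.le]
    have hxa : (0:ℝ) < F x ^ a := Real.rpow_pos_of_pos hFx a
    have hyb : (0:ℝ) < F y ^ b := Real.rpow_pos_of_pos hFy b
    field_simp
  set g : (Fin d → ℕ) → ℝ := fun n => F x ^ a * F y ^ b * (a * P n + b * Q n) with hg_def
  have hPnonneg : ∀ n, 0 ≤ P n := fun n =>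
    div_nonneg (mul_nonneg (hnonneg n) (Real.exp_nonneg _)) hFx.le
  have hQnonneg : ∀ n, 0 ≤ Q n := fun n =>
    div_nonneg (mul_nonneg (hnonneg n) (Real.exp_nonneg _)) hFy.le
  have hle : ∀ n, c n * Real.exp (S n z) ≤ g n := by
    intro n
    rw [hpoint n, hfactor n, hg_def]
    refine mul_le_mul_of_nonneg_left ?_ (by positivity)
    exact Real.geom_mean_le_arith_mean2_weighted ha.le hb.le (hPnonneg n) (hQnonneg n) hab
  -- existence of a strict index
  have key : ∀ n : Fin d → ℕ, c n ≠ 0 → P n = Q n →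
      Real.exp (S n x - S n y) = F x / F y := by
    intro n hn h
    have hc : 0 < c n := (hnonneg n).lt_of_ne' hn
    rw [hP_def, hQ_def] at h
    simp only at h
    have h1 : u n * F y = v n * F x := (div_eq_div_iff hFx.ne' hFy.ne').1 h
    rw [hu_def, hv_def] at h1
    simp only at h1
    have h2 : Real.exp (S n x) * F y = Real.exp (S n y) * F x := by
      apply mul_left_cancel₀ hc.ne'
      rw [← mul_assoc, ← mul_assoc]
      exact h1
    rw [Real.exp_sub, div_eq_div_iff (Real.exp_pos _).ne' hFy.ne', h2, mul_comm]
  have hsplit : ∀ n m : Fin d → ℕ,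
      (∑ j, ((n j : ℝ) - m j) * (x j - y j)) = (S n x - S n y) - (S m x - S m y) := by
    intro n m
    rw [hS]
    simp only
    rw [← Finset.sum_sub_distrib, ← Finset.sum_sub_distrib, ← Finset.sum_sub_distrib]
    exact Finset.sum_congr rfl fun j _ => by ring
  have hPQ : P n₁ ≠ Q n₁ ∨ P n₂ ≠ Q n₂ := by
    by_contra hcon
    push_neg at hcon
    have e1 := key n₁ hn₁ hcon.1
    have e2 := key n₂ hn₂ hcon.2
    have heq : S n₁ x - S n₁ y = S n₂ x - S n₂ y :=
      Real.exp_injective (e1.trans e2.symm)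
    apply hnm
    rw [hsplit n₁ n₂, heq, sub_self]
  obtain ⟨i, hci, hPQi⟩ : ∃ i : Fin d → ℕ, c i ≠ 0 ∧ P i ≠ Q i := by
    rcases hPQ with h | h
    exacts [⟨n₁, hn₁, h⟩, ⟨n₂, hn₂, h⟩]
  have hlt_i : c i * Real.exp (S i z) < g i := by
    rw [hpoint i, hfactor i, hg_def]
    refine mul_lt_mul_of_pos_left ?_ (by positivity)
    exact strict_amgm ha hb hab (hPnonneg i) (hQnonneg i) hPQi
  -- summability and sum of g
  have hgsummable : Summable g := by
    rw [hg_def]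
    apply Summable.mul_left
    exact ((hu.div_const (F x)).mul_left a).add ((hv.div_const (F y)).mul_left b)
  have hgsum : ∑' n, g n = F x ^ a * F y ^ b := by
    rw [hg_def]
    rw [tsum_mul_left]
    have h1 : ∑' n, (a * P n + b * Q n) = 1 := by
      rw [Summable.tsum_add ((hu.div_const (F x)).mul_left a) ((hv.div_const (F y)).mul_left b),
        tsum_mul_left, tsum_mul_left]
      rw [tsum_div_const, tsum_div_const, hFux, hFvy, div_self hFx.ne', div_self hFy.ne']
      simpa using hab
    rw [h1, mul_one]
  have hmain : F z < F x ^ a * F y ^ b := by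
    rw [← hgsum]
    exact Summable.tsum_lt_tsum hle hlt_i hmz hgsummable
  rw [hKF z, hKF x, hKF y]
  calc Real.log (F z) < Real.log (F x ^ a * F y ^ b) := Real.log_lt_log hFz hmain
    _ = a * Real.log (F x) + b * Real.log (F y) := by
      rw [Real.log_mul (Real.rpow_pos_of_pos hFx a).ne' (Real.rpow_pos_of_pos hFy b).ne',
        Real.log_rpow hFx, Real.log_rpow hFy]
end

section
/- Multivariate daffodil lemma: let B(z_1,…,z_d) be a power series with nonnegative real coefficients and let ζ ∈ ℝ_{>0}^d be such that the closed polydisc D(ζ) := {z ∈ ℂ^d : |z_j| ≤ ζ_j for all j} is contained in the domain of convergence of B. Then |B(z)| ≤ B(ζ) for all z ∈ D(ζ). If moreover B has full rank, then |B(z)| attains the value B(ζ) at a unique point of D(ζ) (namely z = ζ) if and only if B is aperiodic. -/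
open scoped BigOperators

namespace PaperStmt

variable {d : ℕ}

/-- Evaluation at a complex point of the multivariate power series with coefficients `c`. -/
noncomputable def evalC (c : (Fin d → ℕ) → ℝ) (z : Fin d → ℂ) : ℂ :=
  ∑' n : Fin d → ℕ, (c n : ℂ) * ∏ j, z j ^ n j

/-- `c` is `q`-periodic. -/
def QPeriodic (c : (Fin d → ℕ) → ℝ) (q : ℕ) : Prop :=
  ∃ p : Fin d → ℕ, (¬ ∀ j, q ∣ p j) ∧ ∃ r : ℤ,
    ∀ n : Fin d → ℕ, c n ≠ 0 →
      ∃ k : ℕ, (∑ j, (p j : ℤ) * (n j : ℤ)) = r + q * k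

/-- `c` is aperiodic if it is not `q`-periodic for any `q ≥ 2`. -/
def Aperiodic (c : (Fin d → ℕ) → ℝ) : Prop :=
  ∀ q : ℕ, 2 ≤ q → ¬ QPeriodic c q

end PaperStmt

open PaperStmt

section AuxDaffodil

open Complex

/-- A complex number whose real part equals its norm is a nonnegative real. -/
lemma aux_re_eq_norm {v : ℂ} (h : v.re = ‖v‖) : v = (‖v‖ : ℂ) := by
  have h2 : v.re ^ 2 + v.im ^ 2 = ‖v‖ ^ 2 := by
    rw [Complex.sq_norm, Complex.normSq_apply]; ring
  have h3 : v.re ^ 2 = ‖v‖ ^ 2 := by rw [h]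
  have him2 : v.im ^ 2 = 0 := by linarith
  have him : v.im = 0 := by
    have := sq_eq_zero_iff.mp (him2 : v.im ^ 2 = 0)
    exact this
  apply Complex.ext
  · simpa using h
  · simpa using him

/-- Termwise vanishing for a nonnegative summable family with zero sum. -/
lemma aux_tsum_zero {ι : Type*} {f : ι → ℝ} (hs : Summable f) (h0 : ∀ n, 0 ≤ f n)
    (h : ∑' n, f n = 0) (n : ι) : f n = 0 :=
  le_antisymm (h ▸ Summable.le_tsum hs n fun j _ => h0 j) (h0 n)

/-- If a real vector has integer dot products with an integral spanning set,
then it has a common integer denominator. -/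
lemma aux_common_denom {d : ℕ} (t : Fin d → ℝ) (V : Set (Fin d → ℝ))
    (hspan : Submodule.span ℝ V = ⊤)
    (hint : ∀ v ∈ V, ∀ j, ∃ a : ℤ, v j = (a : ℝ))
    (hdot : ∀ v ∈ V, ∃ k : ℤ, (∑ j, t j * v j) = (k : ℝ)) :
    ∃ N : ℤ, N ≠ 0 ∧ ∀ j, ∃ b : ℤ, (N : ℝ) * t j = (b : ℝ) := by
  classical
  obtain ⟨s, hsV, hspan2, hli⟩ := exists_linearIndependent ℝ V
  have hfin : s.Finite := hli.setFinite
  haveI := hfin.fintype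
  have hsp : ⊤ ≤ Submodule.span ℝ (Set.range (Subtype.val : s → (Fin d → ℝ))) := by
    rw [Subtype.range_coe, hspan2, hspan]
  let B : Module.Basis s ℝ (Fin d → ℝ) := Module.Basis.mk hli hsp
  have hcard : Fintype.card s = d := by
    have h1 := Module.finrank_eq_card_basis B
    rw [Module.finrank_pi, Fintype.card_fin] at h1
    omega
  let e : Fin d ≃ s := (Fintype.equivFinOfCardEq hcard).symm
  let v : Fin d → (Fin d → ℝ) := fun i => ((e i : s) : Fin d → ℝ)
  have hvV : ∀ i, v i ∈ V := fun i => hsV (e i).2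
  choose Mz hMz using fun i => hint (v i) (hvV i)
  choose w hw using fun i => hdot (v i) (hvV i)
  let B' : Module.Basis (Fin d) ℝ (Fin d → ℝ) := B.reindex e.symm
  have hB' : ∀ i, B' i = v i := by
    intro i
    simp only [B', Module.Basis.reindex_apply, Equiv.symm_symm, B, Module.Basis.mk_apply, v]
  let P := Pi.basisFun ℝ (Fin d)
  have hdet : P.det v ≠ 0 := by
    have h1 := Module.Basis.isUnit_det P B'
    have hv : ⇑B' = v := funext hB'
    rw [hv] at h1
    exact h1.ne_zero
  let Mr : Matrix (Fin d) (Fin d) ℝ := Matrix.of fun i j => v i j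
  have hPdet : P.det v = Mr.transpose.det := by
    have hTM : P.toMatrix v = Mr.transpose := by
      ext i j
      rw [Module.Basis.toMatrix_apply, Pi.basisFun_repr]
      rfl
    rw [Module.Basis.det_apply, hTM]
  have hMrdet : Mr.det ≠ 0 := by
    rw [← Matrix.det_transpose, ← hPdet]; exact hdet
  have hMr : Mr = (Int.castRingHom ℝ).mapMatrix (Matrix.of Mz) := by
    ext i j
    simp only [Mr, Matrix.of_apply, RingHom.mapMatrix_apply, Matrix.map_apply,
      Int.coe_castRingHom]
    exact hMz i j
  set N : ℤ := (Matrix.of Mz).det with hNdef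
  have hNcast : (N : ℝ) = Mr.det := by
    rw [hMr]
    exact RingHom.map_det (Int.castRingHom ℝ) (Matrix.of Mz)
  have hN0 : N ≠ 0 := by
    intro h; rw [h] at hNcast; exact hMrdet (by exact_mod_cast hNcast.symm)
  have hMrvec : Mr.mulVec t = fun i => (w i : ℝ) := by
    funext i
    simp only [Matrix.mulVec, dotProduct, Mr, Matrix.of_apply]
    rw [← hw i]
    exact Finset.sum_congr rfl fun j _ => mul_comm _ _
  have key : Mr.det • t = fun i => ((((Matrix.of Mz).adjugate.mulVec w) i : ℤ) : ℝ) := by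
    have h1 : Mr.adjugate.mulVec (Mr.mulVec t) = Mr.det • t := by
      rw [Matrix.mulVec_mulVec, Matrix.adjugate_mul, Matrix.smul_mulVec,
        Matrix.one_mulVec]
    rw [hMrvec] at h1
    rw [← h1]
    have h2 : Mr.adjugate = (Int.castRingHom ℝ).mapMatrix ((Matrix.of Mz).adjugate) := by
      rw [hMr, ← RingHom.map_adjugate]
    funext i
    rw [h2]
    simp only [Matrix.mulVec, dotProduct, RingHom.mapMatrix_apply, Matrix.map_apply,
      Int.coe_castRingHom]
    push_cast
    rfl
  refine ⟨N, hN0, fun j => ⟨(Matrix.of Mz).adjugate.mulVec w j, ?_⟩⟩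
  have h3 := congrFun key j
  simp only [Pi.smul_apply, smul_eq_mul] at h3
  rw [hNcast]
  exact h3

/-- From a common denominator and a non-integral coordinate, build a periodicity. -/
lemma aux_qperiodic {d : ℕ} (c : (Fin d → ℕ) → ℝ) (t : Fin d → ℝ)
    (N : ℤ) (hN : N ≠ 0) (b : Fin d → ℤ) (hb : ∀ j, (N : ℝ) * t j = (b j : ℝ))
    (hdot : ∀ n m : Fin d → ℕ, c n ≠ 0 → c m ≠ 0 → ∃ k : ℤ,
      (∑ j, t j * ((n j : ℝ) - (m j : ℝ))) = (k : ℝ))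
    (j0 : Fin d) (hj0 : ∀ s : ℤ, t j0 ≠ (s : ℝ))
    (n₀ : Fin d → ℕ) (hn₀ : c n₀ ≠ 0) :
    ∃ q : ℕ, 2 ≤ q ∧ QPeriodic c q := by
  classical
  set q : ℕ := N.natAbs with hqdef
  have hq0 : 0 < q := Int.natAbs_pos.mpr hN
  have hqZ0 : (q : ℤ) ≠ 0 := by exact_mod_cast hq0.ne'
  have hqN : (q : ℤ) ∣ N := by
    rw [Int.natCast_natAbs]
    exact (abs_dvd N N).mpr dvd_rfl
  have hNR : (N : ℝ) ≠ 0 := Int.cast_ne_zero.mpr hN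
  -- non-integrality of t j0 transfers to non-divisibility of b j0 by N
  have hbj0 : ¬ N ∣ b j0 := by
    rintro ⟨s, hs⟩
    apply hj0 s
    have h1 := hb j0
    rw [hs] at h1
    push_cast at h1
    exact mul_left_cancel₀ hNR (by rw [h1])
  -- divisibility of b-sums
  have hdvd : ∀ n m : Fin d → ℕ, c n ≠ 0 → c m ≠ 0 →
      (q : ℤ) ∣ ∑ j, b j * ((n j : ℤ) - m j) := by
    intro n m hn hm
    obtain ⟨k, hk⟩ := hdot n m hn hm
    have hNk : (∑ j, b j * ((n j : ℤ) - m j)) = N * k := by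
      have hcast : ((∑ j, b j * ((n j : ℤ) - m j) : ℤ) : ℝ) = ((N * k : ℤ) : ℝ) := by
        push_cast
        calc ∑ j, (b j : ℝ) * ((n j : ℝ) - m j)
            = ∑ j, (N : ℝ) * (t j * ((n j : ℝ) - m j)) := by
              refine Finset.sum_congr rfl fun j _ => ?_
              rw [← hb j]; ring
          _ = (N : ℝ) * ∑ j, t j * ((n j : ℝ) - (m j : ℝ)) := by rw [← Finset.mul_sum]
          _ = (N : ℝ) * (k : ℝ) := by rw [hk]
      exact_mod_cast hcast
    rw [hNk]
    exact hqN.mul_right k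
  set p : Fin d → ℕ := fun j => (b j % (q : ℤ)).toNat with hpdef
  have hpcast : ∀ j, (p j : ℤ) = b j % (q : ℤ) := fun j =>
    Int.toNat_of_nonneg (Int.emod_nonneg _ hqZ0)
  have hqb : ∀ j, (q : ℤ) ∣ (b j - p j) := by
    intro j
    rw [hpcast j, Int.emod_def]
    exact ⟨b j / q, by ring⟩
  have hq2 : 2 ≤ q := by
    by_contra h
    have hq1 : q = 1 := by omega
    have : N ∣ b j0 := by
      have h1 : N = 1 ∨ N = -1 := by
        rcases Int.natAbs_eq N with h2 | h2 <;> rw [hqdef] at hq1 <;> omega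
      rcases h1 with h1 | h1 <;> rw [h1] <;> [exact one_dvd _; exact (neg_dvd.mpr (one_dvd _))]
    exact hbj0 this
  refine ⟨q, hq2, p, ?_, ?_⟩
  · -- not all p j divisible by q
    intro hall
    have hdq := hall j0
    have hplt : (p j0 : ℤ) < q := by rw [hpcast]; exact Int.emod_lt_of_pos _ (by exact_mod_cast hq0)
    have hp0 : p j0 = 0 := Nat.eq_zero_of_dvd_of_lt hdq (by exact_mod_cast hplt) |>.symm ▸ rfl
    have h4 : (q : ℤ) ∣ b j0 := by
      have := hqb j0
      rw [hp0] at this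
      simpa using this
    exact hbj0 ((Int.natAbs_dvd).mp h4)
  · -- the residue r
    set S : (Fin d → ℕ) → ℤ := fun n => ∑ j, (p j : ℤ) * (n j : ℤ) with hSdef
    refine ⟨S n₀ % (q : ℤ), fun n hn => ?_⟩
    have hdq : (q : ℤ) ∣ (S n - S n₀) := by
      have e1 : S n - S n₀ = ∑ j, (p j : ℤ) * ((n j : ℤ) - n₀ j) := by
        rw [hSdef]
        simp only
        rw [← Finset.sum_sub_distrib]
        exact Finset.sum_congr rfl fun j _ => by ring
      have e2 : ∑ j, (p j : ℤ) * ((n j : ℤ) - n₀ j)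
          = ∑ j, b j * ((n j : ℤ) - n₀ j) - ∑ j, (b j - p j) * ((n j : ℤ) - n₀ j) := by
        rw [← Finset.sum_sub_distrib]
        exact Finset.sum_congr rfl fun j _ => by ring
      rw [e1, e2]
      exact dvd_sub (hdvd n n₀ hn hn₀) (Finset.dvd_sum fun j _ => (hqb j).mul_right _)
    have hSnonneg : 0 ≤ S n := Finset.sum_nonneg fun j _ => by positivity
    have hr1 : 0 ≤ S n₀ % (q : ℤ) := Int.emod_nonneg _ hqZ0
    have hr2 : S n₀ % (q : ℤ) < q := Int.emod_lt_of_pos _ (by exact_mod_cast hq0)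
    have hd2 : (q : ℤ) ∣ (S n - S n₀ % (q : ℤ)) := by
      have h5 : (q : ℤ) ∣ (S n₀ - S n₀ % (q : ℤ)) := by
        rw [Int.emod_def]; exact ⟨S n₀ / q, by ring⟩
      have h6 := dvd_add hdq h5
      have h7 : (S n - S n₀) + (S n₀ - S n₀ % (q : ℤ)) = S n - S n₀ % (q : ℤ) := by ring
      rwa [h7] at h6
    obtain ⟨m, hm⟩ := hd2
    have hm0 : 0 ≤ m := by
      by_contra hneg
      push_neg at hneg
      have : m ≤ -1 := by omega
      have h8 : (q : ℤ) * m ≤ (q : ℤ) * (-1) := by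
        apply mul_le_mul_of_nonneg_left this (by exact_mod_cast hq0.le)
      omega
    refine ⟨m.toNat, ?_⟩
    have : S n = S n₀ % (q : ℤ) + (q : ℤ) * m := by omega
    rw [Int.toNat_of_nonneg hm0]
    exact this

/-- Full rank gives, for each coordinate, a support point with strictly larger coordinate. -/
lemma aux_coord {d : ℕ} (c : (Fin d → ℕ) → ℝ) (hF : FullRank c) (j : Fin d) :
    ∃ n m : Fin d → ℕ, c n ≠ 0 ∧ c m ≠ 0 ∧ m j < n j := by
  classical
  have h : ∃ n m : Fin d → ℕ, c n ≠ 0 ∧ c m ≠ 0 ∧ n j ≠ m j := by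
    by_contra h
    push_neg at h
    have hsub : {v : Fin d → ℝ | ∃ n m : Fin d → ℕ, c n ≠ 0 ∧ c m ≠ 0 ∧
        v = fun j => (n j : ℝ) - (m j : ℝ)} ⊆
        (LinearMap.ker (LinearMap.proj j : (Fin d → ℝ) →ₗ[ℝ] ℝ) : Set (Fin d → ℝ)) := by
      rintro v ⟨n, m, hn, hm, rfl⟩
      simp only [SetLike.mem_coe, LinearMap.mem_ker, LinearMap.proj_apply]
      rw [h n m hn hm]
      ring
    have hle := Submodule.span_le.mpr hsub
    rw [hF] at hle
    have h1 : (Pi.single j 1 : Fin d → ℝ) ∈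
        LinearMap.ker (LinearMap.proj j : (Fin d → ℝ) →ₗ[ℝ] ℝ) := hle Submodule.mem_top
    simp [LinearMap.mem_ker, LinearMap.proj_apply] at h1
  obtain ⟨n, m, hn, hm, hne⟩ := h
  rcases lt_or_gt_of_ne hne with h | h
  · exact ⟨m, n, hm, hn, h⟩
  · exact ⟨n, m, hn, hm, h⟩

end AuxDaffodil

/-- Multivariate daffodil lemma. Let `B` (coefficients `c`) have
nonnegative coefficients and let `ζ ∈ ℝ_{>0}^d` be such that the closed polydisc of
radius `ζ` is contained in the domain of convergence of `B`. Then `|B(z)| ≤ B(ζ)` on the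
polydisc; and if `B` has full rank, `|B(z)|` attains the value `B(ζ)` at a unique point
of the polydisc (namely `z = ζ`) if and only if `B` is aperiodic. -/
theorem multivariate_daffodil {d : ℕ}
    (c : (Fin d → ℕ) → ℝ)
    (hnonneg : ∀ n, 0 ≤ c n)
    (ζ : Fin d → ℝ) (hζ : ∀ j, 0 < ζ j)
    (hconv : Summable fun n : Fin d → ℕ => c n * ∏ j, ζ j ^ n j) :
    (∀ z : Fin d → ℂ, (∀ j, ‖z j‖ ≤ ζ j) → ‖evalC c z‖ ≤ evalR c ζ)
    ∧ (FullRank c →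
        ((∀ z : Fin d → ℂ, (∀ j, ‖z j‖ ≤ ζ j) → ‖evalC c z‖ = evalR c ζ →
            z = fun j => (ζ j : ℂ)) ↔ Aperiodic c)) := by
  classical
  set g : (Fin d → ℕ) → ℝ := fun n => c n * ∏ j, ζ j ^ n j with hgdef
  have hgnonneg : ∀ n, 0 ≤ g n := fun n =>
    mul_nonneg (hnonneg n) (Finset.prod_nonneg fun j _ => pow_nonneg (hζ j).le _)
  have hterm_norm : ∀ (z : Fin d → ℂ) n, ‖(c n : ℂ) * ∏ j, z j ^ n j‖
      = c n * ∏ j, ‖z j‖ ^ n j := by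
    intro z n
    rw [norm_mul, norm_prod]
    simp only [norm_pow]
    rw [Complex.norm_real, Real.norm_eq_abs, abs_of_nonneg (hnonneg n)]
  have hbound : ∀ (z : Fin d → ℂ), (∀ j, ‖z j‖ ≤ ζ j) →
      ∀ n, ‖(c n : ℂ) * ∏ j, z j ^ n j‖ ≤ g n := by
    intro z hz n
    rw [hterm_norm]
    refine mul_le_mul_of_nonneg_left ?_ (hnonneg n)
    exact Finset.prod_le_prod (fun j _ => pow_nonneg (norm_nonneg _) _)
      (fun j _ => pow_le_pow_left₀ (norm_nonneg _) (hz j) _)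
  have hSz : ∀ (z : Fin d → ℂ), (∀ j, ‖z j‖ ≤ ζ j) →
      Summable fun n => (c n : ℂ) * ∏ j, z j ^ n j :=
    fun z hz => Summable.of_norm_bounded hconv (hbound z hz)
  have hSn : ∀ (z : Fin d → ℂ), (∀ j, ‖z j‖ ≤ ζ j) →
      Summable fun n => ‖(c n : ℂ) * ∏ j, z j ^ n j‖ :=
    fun z hz => Summable.of_nonneg_of_le (fun n => norm_nonneg _) (hbound z hz) hconv
  have part1 : ∀ z : Fin d → ℂ, (∀ j, ‖z j‖ ≤ ζ j) → ‖evalC c z‖ ≤ evalR c ζ := by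
    intro z hz
    calc ‖evalC c z‖ ≤ ∑' n, ‖(c n : ℂ) * ∏ j, z j ^ n j‖ :=
          norm_tsum_le_tsum_norm (hSn z hz)
      _ ≤ ∑' n, g n := Summable.tsum_le_tsum (hbound z hz) (hSn z hz) hconv
      _ = evalR c ζ := rfl
  refine ⟨part1, fun hF => ⟨?_, ?_⟩⟩
  · -- uniqueness → aperiodic
    intro hUniq q hq hper
    obtain ⟨p, hp, r, hr⟩ := hper
    have hq0 : (0:ℝ) < (q:ℝ) := by exact_mod_cast (by omega : 0 < q)
    set E : Fin d → ℂ := fun j =>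
      Complex.exp (((2 * Real.pi * p j / q : ℝ) : ℂ) * Complex.I) with hEdef
    set z : Fin d → ℂ := fun j => ((ζ j : ℝ) : ℂ) * E j with hzdef
    have hnormE : ∀ j, ‖E j‖ = 1 := fun j => by
      rw [hEdef]; simp only
      exact Complex.norm_exp_ofReal_mul_I _
    have hzpoly : ∀ j, ‖z j‖ ≤ ζ j := by
      intro j
      rw [hzdef]; simp only
      rw [norm_mul, hnormE j, mul_one, Complex.norm_real, Real.norm_eq_abs,
        abs_of_pos (hζ j)]
    have hkey : ∀ n, c n ≠ 0 → ∏ j, E j ^ n j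
        = Complex.exp (((2 * Real.pi * r / q : ℝ) : ℂ) * Complex.I) := by
      intro n hn
      obtain ⟨k, hk⟩ := hr n hn
      have h1 : ∏ j, E j ^ n j
          = Complex.exp ((((2 * Real.pi / q) * ∑ j, (p j : ℝ) * n j : ℝ) : ℂ) * Complex.I) := by
        rw [hEdef]
        simp only [← Complex.exp_nat_mul]
        rw [← Complex.exp_sum]
        congr 1
        push_cast
        rw [Finset.mul_sum, Finset.sum_mul]
        exact Finset.sum_congr rfl fun j _ => by ring
      have hsum : (∑ j, (p j : ℝ) * n j) = (r : ℝ) + q * k := by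
        have := congrArg (Int.cast : ℤ → ℝ) hk
        push_cast at this
        convert this using 2
      have h2 : ((2 * Real.pi / q) * ((r : ℝ) + q * k) : ℝ)
          = 2 * Real.pi * r / q + (k : ℝ) * (2 * Real.pi) := by
        field_simp
      rw [h1, hsum, h2, Complex.ofReal_add, add_mul, Complex.exp_add]
      have h3 : (((k : ℝ) * (2 * Real.pi) : ℝ) : ℂ) * Complex.I
          = ((k : ℤ) : ℂ) * (2 * (Real.pi : ℂ) * Complex.I) := by push_cast; ring
      rw [h3, Complex.exp_int_mul_two_pi_mul_I, mul_one]
    have hterm : ∀ n, (c n : ℂ) * ∏ j, z j ^ n j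
        = ((g n : ℝ) : ℂ) * Complex.exp (((2 * Real.pi * r / q : ℝ) : ℂ) * Complex.I) := by
      intro n
      by_cases hn : c n = 0
      · simp [hn, hgdef]
      · rw [hzdef]
        simp only
        have hsplit : ∏ j, (((ζ j : ℝ) : ℂ) * E j) ^ n j
            = (∏ j, ((ζ j : ℝ) : ℂ) ^ n j) * ∏ j, E j ^ n j := by
          rw [← Finset.prod_mul_distrib]
          exact Finset.prod_congr rfl fun j _ => mul_pow _ _ _
        rw [hsplit, hkey n hn, hgdef]
        push_cast
        ring
    have hC : evalC c z
        = ((evalR c ζ : ℝ) : ℂ) * Complex.exp (((2 * Real.pi * r / q : ℝ) : ℂ) * Complex.I) := by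
      rw [evalC, tsum_congr hterm, tsum_mul_right]
      congr 1
      exact (Complex.ofReal_tsum _).symm
    have hTnn : 0 ≤ evalR c ζ := tsum_nonneg fun n => hgnonneg n
    have hnormC : ‖evalC c z‖ = evalR c ζ := by
      rw [hC, norm_mul, Complex.norm_exp_ofReal_mul_I,
        mul_one, Complex.norm_real, Real.norm_eq_abs, abs_of_nonneg hTnn]
    have hzeq := hUniq z hzpoly hnormC
    obtain ⟨j, hj⟩ := not_forall.mp hp
    apply hj
    have hζj : ((ζ j : ℝ) : ℂ) ≠ 0 := by exact_mod_cast (hζ j).ne'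
    have hEj : E j = 1 := by
      have h1 := congrFun hzeq j
      rw [hzdef] at h1
      simp only at h1
      have h2 : ((ζ j : ℝ) : ℂ) * E j = ((ζ j : ℝ) : ℂ) * 1 := by rw [mul_one]; exact h1
      exact mul_left_cancel₀ hζj h2
    obtain ⟨s, hs⟩ := Complex.exp_eq_one_iff.mp hEj
    have him := congrArg Complex.im hs
    simp only [Complex.mul_im, Complex.ofReal_re, Complex.ofReal_im, Complex.I_re,
      Complex.I_im, Complex.intCast_re, Complex.intCast_im, Complex.mul_re,
      Complex.ofReal_mul, Complex.re_ofNat, Complex.im_ofNat] at him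
    -- him : 2 * π * p j / q = s * (2 * π) (up to arrangement)
    have hpi : Real.pi ≠ 0 := Real.pi_ne_zero
    have hpj : (p j : ℝ) = (q : ℝ) * s := by
      field_simp at him
      nlinarith [him, Real.pi_pos]
    have hpjZ : (p j : ℤ) = (q : ℤ) * s := by exact_mod_cast hpj
    exact Int.natCast_dvd_natCast.mp ⟨s, hpjZ⟩
  · -- aperiodic → uniqueness
    intro hap z hz heq
    by_cases hd : d = 0
    · subst hd
      exact funext fun j => j.elim0
    have hdpos : 0 < d := Nat.pos_of_ne_zero hd
    obtain ⟨n₀, m₀, hn₀, hm₀, -⟩ := aux_coord c hF ⟨0, hdpos⟩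
    set a : (Fin d → ℕ) → ℂ := fun n => (c n : ℂ) * ∏ j, z j ^ n j with hadef
    have hSz' : Summable a := hSz z hz
    have hSn' : Summable fun n => ‖a n‖ := hSn z hz
    set T := evalR c ζ with hTdef
    have hT0 : 0 < T := by
      have h1 : g n₀ ≤ T := Summable.le_tsum hconv n₀ fun j _ => hgnonneg j
      have h2 : 0 < g n₀ := mul_pos (lt_of_le_of_ne (hnonneg n₀) (Ne.symm hn₀))
        (Finset.prod_pos fun j _ => pow_pos (hζ j) _)
      linarith
    have hnorm_eq : (∑' n, ‖a n‖) = T := by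
      apply le_antisymm (Summable.tsum_le_tsum (hbound z hz) hSn' hconv)
      calc T = ‖evalC c z‖ := heq.symm
        _ ≤ ∑' n, ‖a n‖ := norm_tsum_le_tsum_norm hSn'
    have hterm_eq : ∀ n, ‖a n‖ = g n := by
      intro n
      have h0 : ∀ k, 0 ≤ g k - ‖a k‖ := fun k => sub_nonneg.mpr (hbound z hz k)
      have hs : Summable fun k => g k - ‖a k‖ := hconv.sub hSn'
      have ht : (∑' k, (g k - ‖a k‖)) = 0 := by
        rw [Summable.tsum_sub hconv hSn', hnorm_eq]
        exact sub_self T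
      have := aux_tsum_zero hs h0 ht n
      linarith
    set S := evalC c z with hSdef2
    have hnS : ‖S‖ = T := heq
    have hS0 : S ≠ 0 := by
      intro h
      rw [h, norm_zero] at hnS
      exact hT0.ne' hnS.symm
    have hTC0 : ((T : ℝ) : ℂ) ≠ 0 := by exact_mod_cast hT0.ne'
    set w : ℂ := (starRingEnd ℂ) S / ((T : ℝ) : ℂ) with hwdef
    have hwS : w * S = ((T : ℝ) : ℂ) := by
      rw [hwdef, div_mul_eq_mul_div, mul_comm ((starRingEnd ℂ) S) S, Complex.mul_conj,
        Complex.normSq_eq_norm_sq, hnS]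
      push_cast
      field_simp
    have hwnorm : ‖w‖ = 1 := by
      have hcs : ‖(starRingEnd ℂ) S‖ = ‖S‖ := by
        rw [Complex.norm_conj]
      rw [hwdef, norm_div, hcs, hnS, Complex.norm_real, Real.norm_eq_abs,
        abs_of_pos hT0, div_self hT0.ne']
    have hwa : (∑' n, w * a n) = ((T : ℝ) : ℂ) := by
      have hS' : (∑' n, a n) = S := rfl
      rw [tsum_mul_left, hS', hwS]
    have hre_sum : (∑' n, (w * a n).re) = T := by
      rw [← Complex.re_tsum (hSz'.mul_left w), hwa, Complex.ofReal_re]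
    have hre_le : ∀ n, (w * a n).re ≤ ‖a n‖ := by
      intro n
      calc (w * a n).re ≤ ‖w * a n‖ := Complex.re_le_norm _
        _ = ‖w * a n‖ := rfl
        _ = ‖w‖ * ‖a n‖ := norm_mul _ _
        _ = ‖a n‖ := by rw [hwnorm, one_mul]
    have hSre : Summable fun n => (w * a n).re :=
      (Complex.hasSum_re (hSz'.mul_left w).hasSum).summable
    have halign : ∀ n, w * a n = ((g n : ℝ) : ℂ) := by
      intro n
      have h0 : ∀ k, 0 ≤ ‖a k‖ - (w * a k).re := fun k => sub_nonneg.mpr (hre_le k)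
      have hs : Summable fun k => ‖a k‖ - (w * a k).re := hSn'.sub hSre
      have ht : (∑' k, (‖a k‖ - (w * a k).re)) = 0 := by
        rw [Summable.tsum_sub hSn' hSre, hnorm_eq, hre_sum, sub_self]
      have h1 := aux_tsum_zero hs h0 ht n
      have h2 : (w * a n).re = ‖w * a n‖ := by
        rw [norm_mul, hwnorm, one_mul]
        linarith
      have h3 := aux_re_eq_norm h2
      rw [h3, norm_mul, hwnorm, one_mul, hterm_eq n]
    have hw0 : w ≠ 0 := by
      intro h
      rw [h, norm_zero] at hwnorm
      norm_num at hwnorm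
    set u : Fin d → ℂ := fun j => z j / ((ζ j : ℝ) : ℂ) with hudef
    have hζC : ∀ j, ((ζ j : ℝ) : ℂ) ≠ 0 := fun j => by exact_mod_cast (hζ j).ne'
    have hprodu : ∀ n, c n ≠ 0 → ∏ j, u j ^ n j = w⁻¹ := by
      intro n hn
      have hcn : ((c n : ℝ) : ℂ) ≠ 0 := by exact_mod_cast hn
      have h1 : w * ((c n : ℂ) * ∏ j, z j ^ n j) = ((g n : ℝ) : ℂ) := halign n
      have h2 : ((g n : ℝ) : ℂ) = (c n : ℂ) * ∏ j, ((ζ j : ℝ) : ℂ) ^ n j := by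
        rw [hgdef]
        push_cast
        ring
      have hζn : (∏ j, ((ζ j : ℝ) : ℂ) ^ n j) ≠ 0 :=
        Finset.prod_ne_zero_iff.mpr fun j _ => pow_ne_zero _ (hζC j)
      have h3 : w * ∏ j, z j ^ n j = ∏ j, ((ζ j : ℝ) : ℂ) ^ n j := by
        rw [h2] at h1
        have h4 : (c n : ℂ) * (w * ∏ j, z j ^ n j)
            = (c n : ℂ) * ∏ j, ((ζ j : ℝ) : ℂ) ^ n j := by
          rw [← h1]; ring
        exact mul_left_cancel₀ hcn h4
      have h5 : ∏ j, z j ^ n j = w⁻¹ * ∏ j, ((ζ j : ℝ) : ℂ) ^ n j := by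
        rw [← h3]
        field_simp
      rw [hudef]
      simp only
      rw [show (∏ j, (z j / ((ζ j : ℝ) : ℂ)) ^ n j)
            = (∏ j, z j ^ n j) / ∏ j, ((ζ j : ℝ) : ℂ) ^ n j by
          rw [← Finset.prod_div_distrib]
          exact Finset.prod_congr rfl fun j _ => div_pow _ _ _]
      rw [h5, mul_div_assoc, div_self hζn, mul_one]
    have hunorm_le : ∀ j, ‖u j‖ ≤ 1 := by
      intro j
      rw [hudef]
      simp only [norm_div]
      rw [Complex.norm_real, Real.norm_eq_abs, abs_of_pos (hζ j)]
      exact div_le_one_of_le₀ (hz j) (hζ j).le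
    have hwinv : ‖w⁻¹‖ = 1 := by rw [norm_inv, hwnorm]; norm_num
    have hunorm : ∀ j, ‖u j‖ = 1 := by
      intro j
      obtain ⟨n, m, hn, hm, hlt⟩ := aux_coord c hF j
      have h1 : (∏ k, ‖u k‖ ^ n k) = 1 := by
        have h1' := congrArg norm (hprodu n hn)
        rw [norm_prod] at h1'
        simp only [norm_pow] at h1'
        rw [hwinv] at h1'
        exact h1'
      have hnj : n j ≠ 0 := by omega
      have h2 : (∏ k, ‖u k‖ ^ n k)
          = ‖u j‖ ^ n j * ∏ k ∈ Finset.univ.erase j, ‖u k‖ ^ n k :=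
        (Finset.mul_prod_erase Finset.univ _ (Finset.mem_univ j)).symm
      have h3 : (∏ k ∈ Finset.univ.erase j, ‖u k‖ ^ n k) ≤ 1 :=
        Finset.prod_le_one (fun k _ => pow_nonneg (norm_nonneg _) _)
          (fun k _ => pow_le_one₀ (norm_nonneg _) (hunorm_le k))
      have h5 : 0 ≤ ∏ k ∈ Finset.univ.erase j, ‖u k‖ ^ n k :=
        Finset.prod_nonneg fun k _ => pow_nonneg (norm_nonneg _) _
      have h4 : ‖u j‖ ^ n j ≤ 1 := pow_le_one₀ (norm_nonneg _) (hunorm_le j)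
      have h6 : (1:ℝ) ≤ ‖u j‖ ^ n j := by
        have h8 : 0 ≤ ‖u j‖ ^ n j := pow_nonneg (norm_nonneg _) _
        have h9 := mul_le_mul_of_nonneg_left h3 h8
        rw [mul_one] at h9
        have h10 : ‖u j‖ ^ n j * ∏ k ∈ Finset.univ.erase j, ‖u k‖ ^ n k = 1 := by
          rw [← h2]; exact h1
        linarith
      by_contra hne
      have hlt1 : ‖u j‖ < 1 := lt_of_le_of_ne (hunorm_le j) hne
      have h7 := pow_lt_one₀ (norm_nonneg (u j)) hlt1 hnj
      linarith
    set θ : Fin d → ℝ := fun j => (u j).arg with hθdef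
    have huexp : ∀ j, u j = Complex.exp (((θ j : ℝ) : ℂ) * Complex.I) := by
      intro j
      have habs : ‖u j‖ = 1 := by
        exact hunorm j
      calc u j = (‖u j‖ : ℂ) * Complex.exp (((u j).arg : ℂ) * Complex.I) :=
            (Complex.norm_mul_exp_arg_mul_I _).symm
        _ = Complex.exp (((θ j : ℝ) : ℂ) * Complex.I) := by
            rw [habs]
            simp [hθdef]
    have hexp_sum : ∀ n, c n ≠ 0 →
        Complex.exp (∑ j, (n j : ℂ) * (((θ j : ℝ) : ℂ) * Complex.I)) = w⁻¹ := by
      intro n hn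
      rw [Complex.exp_sum, ← hprodu n hn]
      exact Finset.prod_congr rfl fun j _ => by rw [huexp j, ← Complex.exp_nat_mul]
    have hdotθ : ∀ n m : Fin d → ℕ, c n ≠ 0 → c m ≠ 0 → ∃ k : ℤ,
        (∑ j, (θ j / (2 * Real.pi)) * ((n j : ℝ) - (m j : ℝ))) = (k : ℝ) := by
      intro n m hn hm
      have h1 : Complex.exp (∑ j, (n j : ℂ) * (((θ j : ℝ) : ℂ) * Complex.I))
          = Complex.exp (∑ j, (m j : ℂ) * (((θ j : ℝ) : ℂ) * Complex.I)) := by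
        rw [hexp_sum n hn, hexp_sum m hm]
      obtain ⟨k, hk⟩ := Complex.exp_eq_exp_iff_exists_int.mp h1
      refine ⟨k, ?_⟩
      have him := congrArg Complex.im hk
      rw [Complex.add_im, Complex.im_sum, Complex.im_sum] at him
      simp only [Complex.mul_im, Complex.mul_re, Complex.natCast_re, Complex.natCast_im,
        Complex.ofReal_re, Complex.ofReal_im, Complex.I_re, Complex.I_im,
        Complex.intCast_re, Complex.intCast_im, Complex.re_ofNat, Complex.im_ofNat,
        mul_zero, zero_mul, mul_one, add_zero, zero_add, sub_zero] at him
      -- him : ∑ j, n j * θ j = ∑ j, m j * θ j + k * (2 * π)  (hopefully)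
      have hgoal : (∑ j, (θ j / (2 * Real.pi)) * ((n j : ℝ) - (m j : ℝ)))
          = ((∑ j, (n j : ℝ) * θ j) - ∑ j, (m j : ℝ) * θ j) / (2 * Real.pi) := by
        rw [← Finset.sum_sub_distrib, Finset.sum_div]
        exact Finset.sum_congr rfl fun j _ => by ring
      rw [hgoal]
      have hpi : Real.pi ≠ 0 := Real.pi_ne_zero
      field_simp
      linarith [him]
    set t : Fin d → ℝ := fun j => θ j / (2 * Real.pi) with htdef
    have hVint : ∀ v ∈ {v : Fin d → ℝ | ∃ n m : Fin d → ℕ, c n ≠ 0 ∧ c m ≠ 0 ∧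
        v = fun j => (n j : ℝ) - (m j : ℝ)}, ∀ j, ∃ aa : ℤ, v j = (aa : ℝ) := by
      rintro v ⟨n, m, hn, hm, rfl⟩ j
      exact ⟨(n j : ℤ) - m j, by push_cast; ring⟩
    have hVdot : ∀ v ∈ {v : Fin d → ℝ | ∃ n m : Fin d → ℕ, c n ≠ 0 ∧ c m ≠ 0 ∧
        v = fun j => (n j : ℝ) - (m j : ℝ)}, ∃ k : ℤ, (∑ j, t j * v j) = (k : ℝ) := by
      rintro v ⟨n, m, hn, hm, rfl⟩
      obtain ⟨k, hk⟩ := hdotθ n m hn hm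
      exact ⟨k, hk⟩
    obtain ⟨N, hN0, hNb⟩ := aux_common_denom t _ hF hVint hVdot
    choose b hb using hNb
    by_contra hne
    have hj0 : ∃ j, z j ≠ ((ζ j : ℝ) : ℂ) := by
      by_contra h
      push_neg at h
      exact hne (funext h)
    obtain ⟨j0, hzj0⟩ := hj0
    have huj0 : u j0 ≠ 1 := by
      rw [hudef]
      simp only
      intro h
      exact hzj0 ((div_eq_one_iff_eq (hζC j0)).mp h)
    have hθj0 : θ j0 ≠ 0 := by
      intro h
      apply huj0
      rw [huexp j0, h]
      simp
    have htj0 : ∀ s : ℤ, t j0 ≠ (s : ℝ) := by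
      intro s hs
      have h1 : |θ j0| ≤ Real.pi :=
        abs_le.mpr ⟨(Complex.neg_pi_lt_arg _).le, Complex.arg_le_pi _⟩
      have hpi : (0:ℝ) < Real.pi := Real.pi_pos
      have h2 : |t j0| ≤ 1/2 := by
        rw [htdef]
        simp only
        rw [abs_div, abs_of_pos (by positivity : (0:ℝ) < 2 * Real.pi),
          div_le_iff₀ (by positivity : (0:ℝ) < 2 * Real.pi)]
        linarith
      rw [hs] at h2
      have h3 : |(s : ℝ)| < 1 := lt_of_le_of_lt h2 (by norm_num)
      have h4 : s = 0 := by
        have h5 := abs_lt.mp (show |s| < 1 by exact_mod_cast h3)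
        omega
      rw [h4] at hs
      simp only [Int.cast_zero] at hs
      rw [htdef] at hs
      simp only at hs
      rcases div_eq_zero_iff.mp hs with h5 | h5
      · exact hθj0 h5
      · exact absurd h5 (by positivity)
    obtain ⟨q, hq2, hper⟩ := aux_qperiodic c t N hN0 b hb hdotθ j0 htj0 n₀ hn₀
    exact hap q hq2 hper
end

section
/- Saddle point inversion: let X and Y be disjoint sets of adversaries and let ζ̃ be the saddle point associated with ℙ(m ≻_α X ∧ m ≼_α Y). Let j ∈ X, X' := X \ {j} and Y' := Y ∪ {j}. Then the saddle point associated with ℙ(m ≻_α X' ∧ m ≼_α Y') has its k-th coordinate equal to ζ̃_k for every k ≠ j, and its j-th coordinate equal to 1/ζ̃_j. -/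
open scoped BigOperators Topology
open Asymptotics Filter

namespace PaperStmt

/-- The characteristic polynomial of a General Independent Culture on `d+1` candidates.
A ranking is a permutation `σ` of `Fin (d+1)`, where `σ c` is the rank of candidate `c`
(lower rank = preferred); candidate `a` is ranked above `b` iff `σ a < σ b`.
The coefficient of `∏_{j ∈ s} x_j` is the probability that the set of adversaries
ranked above the last candidate is exactly `s`. -/
noncomputable def charPoly (d : ℕ) (p : Equiv.Perm (Fin (d+1)) → ℝ) :
    MvPolynomial (Fin d) ℝ :=
  ∑ s : Finset (Fin d),
    MvPolynomial.C
      (∑ σ ∈ Finset.univ.filter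
          (fun σ : Equiv.Perm (Fin (d+1)) =>
            ∀ j : Fin d, (σ j.castSucc < σ (Fin.last d) ↔ j ∈ s)),
        p σ) *
      ∏ j ∈ s, MvPolynomial.X j

/-- Probability that the last candidate is an `α`-winner among `n` voters, where
`β = 1 - α`: the sum of the coefficients of `P(x)^n` over all exponent vectors `ℓ`
with `ℓ j ≤ ⌈β j * n⌉ - 1` for every adversary `j`. -/
noncomputable def probWinner (d : ℕ) (p : Equiv.Perm (Fin (d+1)) → ℝ)
    (β : Fin d → ℝ) (n : ℕ) : ℝ :=
  ∑ ℓ : ((j : Fin d) → Fin ⌈β j * (n : ℝ)⌉₊),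
    MvPolynomial.coeff (Finsupp.equivFunOnFinite.symm fun j => (ℓ j : ℕ))
      ((charPoly d p) ^ n)

/-- The cumulant generating function `K(t) = log P(e^t)` of the characteristic
polynomial. -/
noncomputable def cgf (d : ℕ) (p : Equiv.Perm (Fin (d+1)) → ℝ) (t : Fin d → ℝ) : ℝ :=
  Real.log (MvPolynomial.eval (fun j => Real.exp (t j)) (charPoly d p))

/-- Hessian matrix of a function on `ℝ^d` at a point, via iterated `fderiv`. -/
noncomputable def hess {d : ℕ} (f : (Fin d → ℝ) → ℝ) (τ : Fin d → ℝ) :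
    Matrix (Fin d) (Fin d) ℝ :=
  Matrix.of fun i j =>
    fderiv ℝ (fun t => fderiv ℝ f t (Pi.single j 1)) τ (Pi.single i 1)

end PaperStmt

open PaperStmt

lemma charPoly_eval_pos (d : ℕ) (hd : 1 ≤ d) (p : Equiv.Perm (Fin (d+1)) → ℝ)
    (hp : ∀ σ, 0 < p σ) (x : Fin d → ℝ) (hx : ∀ j, 0 < x j) :
    0 < MvPolynomial.eval x (charPoly d p) := by
  have hEval : MvPolynomial.eval x (charPoly d p) =
      ∑ s : Finset (Fin d),
        (∑ σ ∈ Finset.univ.filter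
            (fun σ : Equiv.Perm (Fin (d+1)) =>
              ∀ j : Fin d, (σ j.castSucc < σ (Fin.last d) ↔ j ∈ s)),
          p σ) * ∏ j ∈ s, x j := by
    simp [charPoly]
  rw [hEval]
  have hterm : ∀ s : Finset (Fin d),
      0 ≤ (∑ σ ∈ Finset.univ.filter
          (fun σ : Equiv.Perm (Fin (d+1)) =>
            ∀ j : Fin d, (σ j.castSucc < σ (Fin.last d) ↔ j ∈ s)),
        p σ) * ∏ j ∈ s, x j := by
    intro s
    exact mul_nonneg (Finset.sum_nonneg fun σ _ => (hp σ).le)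
      (Finset.prod_nonneg fun j _ => (hx j).le)
  have h0last : (0 : Fin (d+1)) ≠ Fin.last d := by
    intro h
    have := congrArg Fin.val h
    simp [Fin.val_last] at this
    omega
  set σ₀ : Equiv.Perm (Fin (d+1)) := Equiv.swap 0 (Fin.last d) with hσ₀
  have hmem : σ₀ ∈ Finset.univ.filter
      (fun σ : Equiv.Perm (Fin (d+1)) =>
        ∀ j : Fin d, (σ j.castSucc < σ (Fin.last d) ↔ j ∈ (∅ : Finset (Fin d)))) := by
    refine Finset.mem_filter.mpr ⟨Finset.mem_univ _, fun j => ?_⟩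
    simp only [Finset.notMem_empty, iff_false]
    have h1 : σ₀ (Fin.last d) = 0 := by simp [hσ₀]
    rw [h1]
    exact fun h => (Fin.not_lt_zero _) h
  have hpos : 0 < (∑ σ ∈ Finset.univ.filter
      (fun σ : Equiv.Perm (Fin (d+1)) =>
        ∀ j : Fin d, (σ j.castSucc < σ (Fin.last d) ↔ j ∈ (∅ : Finset (Fin d)))),
      p σ) * ∏ j ∈ (∅ : Finset (Fin d)), x j := by
    rw [Finset.prod_empty, mul_one]
    exact Finset.sum_pos (fun σ _ => hp σ) ⟨σ₀, hmem⟩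
  calc (0 : ℝ) < _ := hpos
    _ ≤ _ := Finset.single_le_sum (fun s _ => hterm s) (Finset.mem_univ ∅)

/-- Saddle point inversion. Moving an adversary `j₀` from the set
`X` (pairwise wins of `m`) to the set `Y` (pairwise non-wins of `m`) inverts the
`j₀`-th coordinate of the associated saddle point, and leaves the others unchanged. -/
theorem saddle_point_inversion
    (d : ℕ) (hd : 1 ≤ d)
    (p : Equiv.Perm (Fin (d+1)) → ℝ)
    (hp : ∀ σ, 0 < p σ) (hpsum : ∑ σ : Equiv.Perm (Fin (d+1)), p σ = 1)
    (α : Fin d → ℝ) (hα : ∀ j, α j ∈ Set.Ioo (0 : ℝ) 1)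
    (β : Fin d → ℝ) (hβ : β = fun j => 1 - α j)
    (X Y : Finset (Fin d)) (hXY : Disjoint X Y)
    -- the modified cumulant generating function `K̃(t) = log P^X_Y(e^t)`
    (Kt : (Fin d → ℝ) → ℝ)
    (hKt : Kt = fun t => Real.log
      ((∏ j ∈ Y, Real.exp (t j)) *
        MvPolynomial.eval
          (fun j => if j ∈ X then Real.exp (t j)
            else if j ∈ Y then Real.exp (-(t j)) else 1)
          (charPoly d p)))
    -- the objective whose unique maximizer is the log saddle point `τ̃`
    (G : (Fin d → ℝ) → ℝ)
    (hG : G = fun t => -Kt t + (∑ j ∈ X, β j * t j) + ∑ j ∈ Y, α j * t j)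
    (τt : Fin d → ℝ)
    (hτdom : ∀ k, k ∉ X ∪ Y → τt k = 0)
    (hτmax : ∀ t : Fin d → ℝ, (∀ k, k ∉ X ∪ Y → t k = 0) → t ≠ τt → G t < G τt)
    -- the saddle point `ζ̃ = e^{τ̃}` associated with `(X, Y)`
    (ζt : Fin d → ℝ) (hζt : ζt = fun k => Real.exp (τt k))
    -- the adversary `j₀ ∈ X` to be transferred from `X` to `Y`
    (j₀ : Fin d) (hj₀ : j₀ ∈ X)
    (X' Y' : Finset (Fin d)) (hX' : X' = X.erase j₀) (hY' : Y' = insert j₀ Y)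
    -- data for the problem associated with `(X', Y')`
    (Kt' : (Fin d → ℝ) → ℝ)
    (hKt' : Kt' = fun t => Real.log
      ((∏ j ∈ Y', Real.exp (t j)) *
        MvPolynomial.eval
          (fun j => if j ∈ X' then Real.exp (t j)
            else if j ∈ Y' then Real.exp (-(t j)) else 1)
          (charPoly d p)))
    (G' : (Fin d → ℝ) → ℝ)
    (hG' : G' = fun t => -Kt' t + (∑ j ∈ X', β j * t j) + ∑ j ∈ Y', α j * t j) :
    -- conclusion: the saddle point associated with `(X', Y')` has `k`-th coordinate
    -- `ζ̃_k` for `k ≠ j₀` and `1/ζ̃_{j₀}` at `j₀`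
    ∃ τ' : Fin d → ℝ,
      (∀ k, k ∉ X' ∪ Y' → τ' k = 0) ∧
      (∀ t : Fin d → ℝ, (∀ k, k ∉ X' ∪ Y' → t k = 0) → t ≠ τ' → G' t < G' τ') ∧
      (∀ k, k ≠ j₀ → Real.exp (τ' k) = ζt k) ∧
      Real.exp (τ' j₀) = (ζt j₀)⁻¹ := by
  have hj₀Y : j₀ ∉ Y := Finset.disjoint_left.mp hXY hj₀
  set F : (Fin d → ℝ) → Fin d → ℝ :=
    fun t k => if k = j₀ then -(t k) else t k with hF
  have hFF : ∀ t, F (F t) = t := by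
    intro t
    funext k
    by_cases hk : k = j₀ <;> simp [hF, hk]
  have hU : X' ∪ Y' = X ∪ Y := by
    rw [hX', hY']
    ext k
    simp only [Finset.mem_union, Finset.mem_erase, Finset.mem_insert]
    constructor
    · rintro (⟨_, h⟩ | h | h)
      · exact Or.inl h
      · exact Or.inl (h ▸ hj₀)
      · exact Or.inr h
    · rintro (h | h)
      · by_cases hk : k = j₀
        · exact Or.inr (Or.inl hk)
        · exact Or.inl ⟨hk, h⟩
      · exact Or.inr (Or.inr h)
  -- key identity for the modified cgf
  have hKflip : ∀ t, Kt' t = t j₀ + Kt (F t) := by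
    intro t
    rw [hKt', hKt]
    simp only
    have hfun : (fun j => if j ∈ X then Real.exp (F t j)
          else if j ∈ Y then Real.exp (-(F t j)) else 1)
        = (fun j => if j ∈ X' then Real.exp (t j)
          else if j ∈ Y' then Real.exp (-(t j)) else 1) := by
      funext j
      by_cases hj : j = j₀
      · have hx' : j ∉ X' := by rw [hX', hj]; exact Finset.notMem_erase _ _
        have hy' : j ∈ Y' := by rw [hY', hj]; exact Finset.mem_insert_self _ _
        rw [hj] at hx' hy'
        simp [hj₀, hx', hy', hF, hj]
      · have hFt : F t j = t j := by simp [hF, hj]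
        rw [hFt]
        by_cases hjX : j ∈ X
        · have hx' : j ∈ X' := by rw [hX']; exact Finset.mem_erase.mpr ⟨hj, hjX⟩
          simp [hjX, hx']
        · by_cases hjY : j ∈ Y
          · have hx' : j ∉ X' := by rw [hX']; simp [hjX]
            have hy' : j ∈ Y' := by rw [hY']; exact Finset.mem_insert_of_mem hjY
            simp [hjX, hjY, hx', hy']
          · have hx' : j ∉ X' := by rw [hX']; simp [hjX]
            have hy' : j ∉ Y' := by rw [hY']; simp [hj, hjY]
            simp [hjX, hjY, hx', hy']
    rw [hfun]
    have hprod : ∏ j ∈ Y', Real.exp (t j)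
        = Real.exp (t j₀) * ∏ j ∈ Y, Real.exp (t j) := by
      rw [hY', Finset.prod_insert hj₀Y]
    have hprodF : ∏ j ∈ Y, Real.exp (F t j) = ∏ j ∈ Y, Real.exp (t j) :=
      Finset.prod_congr rfl fun j hj => by
        have hjj : j ≠ j₀ := fun h => hj₀Y (h ▸ hj)
        simp [hF, hjj]
    have hMpos : 0 < (∏ j ∈ Y, Real.exp (t j)) *
        MvPolynomial.eval
          (fun j => if j ∈ X' then Real.exp (t j)
            else if j ∈ Y' then Real.exp (-(t j)) else 1) (charPoly d p) := by
      refine mul_pos (Finset.prod_pos fun j _ => Real.exp_pos _) ?_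
      refine charPoly_eval_pos d hd p hp _ fun j => ?_
      split_ifs <;> first | exact Real.exp_pos _ | exact one_pos
    rw [hprod, hprodF, mul_assoc, Real.log_mul (Real.exp_ne_zero _) hMpos.ne',
      Real.log_exp]
  -- key identity for the objective
  have hbj0 : β j₀ = 1 - α j₀ := by rw [hβ]
  have hGflip : ∀ t, G' t = G (F t) := by
    intro t
    rw [hG, hG']
    simp only
    have hsumX : ∑ j ∈ X, β j * F t j
        = β j₀ * (-(t j₀)) + ∑ j ∈ X', β j * t j := by
      rw [← Finset.add_sum_erase X (fun j => β j * F t j) hj₀, ← hX']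
      congr 1
      · simp [hF]
      · refine Finset.sum_congr rfl fun j hj => ?_
        have hjj : j ≠ j₀ := by
          rw [hX'] at hj; exact (Finset.mem_erase.mp hj).1
        simp [hF, hjj]
    have hsumY : ∑ j ∈ Y, α j * F t j = ∑ j ∈ Y, α j * t j :=
      Finset.sum_congr rfl fun j hj => by
        have hjj : j ≠ j₀ := fun h => hj₀Y (h ▸ hj)
        simp [hF, hjj]
    rw [hKflip t, hsumX, hsumY, hY', Finset.sum_insert hj₀Y, hbj0]
    ring
  refine ⟨F τt, ?_, ?_, ?_, ?_⟩
  · intro k hk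
    rw [hU] at hk
    have hkj : k ≠ j₀ := fun h => hk (Finset.mem_union_left _ (h ▸ hj₀))
    simp [hF, hkj, hτdom k hk]
  · intro t ht htne
    rw [hGflip t, hGflip (F τt), hFF]
    refine hτmax (F t) ?_ ?_
    · intro k hk
      rw [← hU] at hk
      have hkj : k ≠ j₀ := fun h => by
        rw [h, hU] at hk; exact hk (Finset.mem_union_left _ hj₀)
      simp [hF, hkj, ht k hk]
    · intro h
      exact htne (by rw [← hFF t, h])
  · intro k hk
    rw [hζt]
    simp [hF, hk]
  · rw [hζt]
    simp [hF, Real.exp_neg]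
end
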